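/- Let 𝔥 be a finite-dimensional complex 2-step nilpotent Lie algebra, let Δ ⊆ 𝔥 be a subspace equipped with a Hermitian inner product ρ, let E be a finite set of nonzero integers, let c : E → Δ, and define v : [0,1] → 𝔥 by v(t) := Σ_{n∈E} c_n e^{2πint}. Then the endpoint satisfies E(v) = Σ_{n∈E} (1/(4πin)) ⁅c_n, c'_{−n}⁆, where c'_m := c_m if m ∈ E and c'_m := 0 otherwise, and the energy satisfies ∫₀¹ ρ(v(t),v(t)) dt = Σ_{n∈E} ρ(c_n,c_n). -/

import Mathlib

open MeasureTheory

/-- The endpoint of the horizontal curve with control `u` in the complex 2-step model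
group `(𝔥,∗)`. -/
noncomputable def endpointMapC {L : Type*} [NormedAddCommGroup L] [NormedSpace ℂ L]
    (bracket : L →ₗ[ℂ] L →ₗ[ℂ] L) (u : ℝ → L) : L :=
  (∫ t in (0:ℝ)..1, u t) +
    (2⁻¹ : ℝ) • ∫ t in (0:ℝ)..1, bracket (∫ s in (0:ℝ)..t, u s) (u t)

noncomputable def cw (k : ℤ) : ℂ := 2 * Real.pi * Complex.I * k

lemma cw_ne (k : ℤ) (hk : k ≠ 0) : cw k ≠ 0 := by
  simp [cw, Real.pi_ne_zero, Complex.I_ne_zero, hk]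

lemma cont_exp_cw (k : ℤ) : Continuous fun t : ℝ => Complex.exp (cw k * t) := by fun_prop

lemma integral_exp_cw (k : ℤ) :
    (∫ t in (0:ℝ)..1, Complex.exp (cw k * t)) = if k = 0 then 1 else 0 := by
  by_cases hk : k = 0
  · simp [hk, cw]
  · rw [integral_exp_mul_complex (cw_ne k hk)]
    have h1 : Complex.exp (cw k) = 1 := by
      rw [show cw k = (k:ℂ) * (2 * Real.pi * Complex.I) by push_cast [cw]; ring]
      exact Complex.exp_int_mul_two_pi_mul_I k
    simp [h1, hk]

/-- for `v(t) = Σ_{n∈E} c_n e^{2πint}` with `E` a finite set of nonzero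
integers and `c_n ∈ Δ`, one has `E(v) = Σ_{n∈E} (1/(4πin)) ⁅c_n, c'_{-n}⁆` (where
`c'_m = c_m` if `m ∈ E` and `0` otherwise), and
`∫₀¹ ρ(v,v) = Σ_{n∈E} ρ(c_n,c_n)`. -/
theorem stmt_3 {L : Type*} [NormedAddCommGroup L] [NormedSpace ℂ L] [FiniteDimensional ℂ L]
    (bracket : L →ₗ[ℂ] L →ₗ[ℂ] L)
    (halt : ∀ x : L, bracket x x = 0)
    (h2step : ∀ x y z : L, bracket (bracket x y) z = 0)
    (Δ : Submodule ℂ L)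
    -- `ρ` is a Hermitian inner product on `Δ` (sesquilinear, conjugate-symmetric and
    -- positive definite on `Δ`)
    (ρ : L →ₗ⋆[ℂ] L →ₗ[ℂ] ℂ)
    (hherm : ∀ x ∈ Δ, ∀ y ∈ Δ, ρ y x = starRingEnd ℂ (ρ x y))
    (hpos : ∀ x ∈ Δ, x ≠ 0 → 0 < (ρ x x).re)
    (E : Finset ℤ) (hE : (0:ℤ) ∉ E)
    (c : ℤ → L) (hc : ∀ n ∈ E, c n ∈ Δ)
    (v : ℝ → L)
    (hv : ∀ t : ℝ, v t = ∑ n ∈ E,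
      Complex.exp (2 * Real.pi * Complex.I * (n : ℂ) * (t : ℂ)) • c n) :
    endpointMapC bracket v =
      ∑ n ∈ E, ((4 * Real.pi * Complex.I * (n : ℂ))⁻¹) •
        bracket (c n) (if -n ∈ E then c (-n) else 0) ∧
    (∫ t in (0:ℝ)..1, ρ (v t) (v t)) = ∑ n ∈ E, ρ (c n) (c n) := by
  classical
  have hne : ∀ n ∈ E, n ≠ 0 := fun n hn h => hE (h ▸ hn)
  have hv' : v = fun t : ℝ => ∑ n ∈ E, Complex.exp (cw n * t) • c n := by
    funext t; exact hv t
  have hcont : ∀ (k : ℤ) (x : L), Continuous fun t : ℝ => Complex.exp (cw k * t) • x :=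
    fun k x => (cont_exp_cw k).smul continuous_const
  have h1 : (∫ t in (0:ℝ)..1, v t) = 0 := by
    rw [hv', intervalIntegral.integral_finset_sum
      (fun n _ => ((hcont n (c n)).intervalIntegrable 0 1))]
    refine Finset.sum_eq_zero fun n hn => ?_
    rw [intervalIntegral.integral_smul_const, integral_exp_cw, if_neg (hne n hn), zero_smul]
  have hF : ∀ t : ℝ, (∫ s in (0:ℝ)..t, v s)
      = ∑ n ∈ E, ((Complex.exp (cw n * t) - 1) / cw n) • c n := by
    intro t
    rw [hv', intervalIntegral.integral_finset_sum
      (fun n _ => ((hcont n (c n)).intervalIntegrable 0 t))]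
    refine Finset.sum_congr rfl fun n hn => ?_
    rw [intervalIntegral.integral_smul_const, integral_exp_mul_complex (cw_ne n (hne n hn))]
    norm_num
  have hbr : ∀ t : ℝ, bracket (∫ s in (0:ℝ)..t, v s) (v t)
      = ∑ n ∈ E, ∑ m ∈ E,
          (((Complex.exp (cw n * t) - 1) / cw n) * Complex.exp (cw m * t)) •
            bracket (c n) (c m) := by
    intro t
    rw [hF t, hv']
    beta_reduce
    simp only [map_sum, LinearMap.map_smul, LinearMap.sum_apply, LinearMap.smul_apply,
      Finset.smul_sum, smul_smul]
    rw [Finset.sum_comm]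
  have hcoef : ∀ n ∈ E, ∀ m ∈ E,
      (∫ t in (0:ℝ)..1, ((Complex.exp (cw n * t) - 1) / cw n) * Complex.exp (cw m * t))
        = if m = -n then (cw n)⁻¹ else 0 := by
    intro n hn m hm
    have hrw : ∀ t : ℝ, ((Complex.exp (cw n * t) - 1) / cw n) * Complex.exp (cw m * t)
        = (cw n)⁻¹ * (Complex.exp (cw (n + m) * t) - Complex.exp (cw m * t)) := by
      intro t
      have he : Complex.exp (cw (n+m) * t)
          = Complex.exp (cw n * t) * Complex.exp (cw m * t) := by
        rw [← Complex.exp_add]; congr 1; push_cast [cw]; ring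
      rw [he, div_eq_mul_inv]; ring
    simp only [hrw]
    rw [intervalIntegral.integral_const_mul,
        intervalIntegral.integral_sub ((cont_exp_cw _).intervalIntegrable 0 1)
          ((cont_exp_cw _).intervalIntegrable 0 1),
        integral_exp_cw, integral_exp_cw, if_neg (hne m hm)]
    by_cases h : m = -n
    · have : n + m = 0 := by omega
      simp [h, this]
    · have : n + m ≠ 0 := by omega
      simp [h, this]
  have hcontc : ∀ n m : ℤ, Continuous fun t : ℝ =>
      (((Complex.exp (cw n * t) - 1) / cw n) * Complex.exp (cw m * t)) •
        bracket (c n) (c m) := by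
    intro n m
    exact ((((cont_exp_cw n).sub continuous_const).div_const _).mul (cont_exp_cw m)).smul
      continuous_const
  have h2 : (∫ t in (0:ℝ)..1, bracket (∫ s in (0:ℝ)..t, v s) (v t))
      = ∑ n ∈ E, (if -n ∈ E then (cw n)⁻¹ • bracket (c n) (c (-n)) else 0) := by
    rw [intervalIntegral.integral_congr (fun t _ => hbr t)]
    rw [intervalIntegral.integral_finset_sum
      (fun n _ => ((continuous_finset_sum E fun m _ => hcontc n m).intervalIntegrable 0 1))]
    refine Finset.sum_congr rfl fun n hn => ?_
    rw [intervalIntegral.integral_finset_sum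
      (fun m _ => ((hcontc n m).intervalIntegrable 0 1))]
    have hterm : ∀ m ∈ E,
        (∫ t in (0:ℝ)..1, (((Complex.exp (cw n * t) - 1) / cw n) *
            Complex.exp (cw m * t)) • bracket (c n) (c m))
          = if m = -n then (cw n)⁻¹ • bracket (c n) (c m) else 0 := by
      intro m hm
      rw [intervalIntegral.integral_smul_const, hcoef n hn m hm]
      split <;> simp
    rw [Finset.sum_congr rfl hterm,
      Finset.sum_ite_eq' E (-n) (fun m => (cw n)⁻¹ • bracket (c n) (c m))]
  constructor
  · rw [endpointMapC, h1, h2, zero_add, Finset.smul_sum]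
    refine Finset.sum_congr rfl fun n hn => ?_
    by_cases h : -n ∈ E
    · rw [if_pos h, if_pos h]
      have hx : ((4 : ℂ) * Real.pi * Complex.I * n)⁻¹ = (2⁻¹ : ℂ) * (cw n)⁻¹ := by
        rw [show (4:ℂ) * Real.pi * Complex.I * n = 2 * cw n by rw [cw]; ring, mul_inv]
      rw [hx, ← smul_smul, ← Complex.coe_smul]
      norm_num
    · rw [if_neg h, if_neg h]
      simp
  · have hconj : ∀ (k : ℤ) (t : ℝ),
        (starRingEnd ℂ) (Complex.exp (cw k * t)) = Complex.exp (cw (-k) * t) := by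
      intro k t
      rw [← Complex.exp_conj]
      congr 1
      simp only [cw, map_mul, Complex.conj_I, Complex.conj_ofReal, map_ofNat, map_intCast]
      push_cast
      ring
    have hρ : ∀ t : ℝ, (ρ (v t)) (v t)
        = ∑ n ∈ E, ∑ m ∈ E, Complex.exp (cw (m - n) * t) * (ρ (c n)) (c m) := by
      intro t
      rw [hv']
      beta_reduce
      simp only [map_sum, map_smulₛₗ, LinearMap.map_smul, LinearMap.sum_apply,
        LinearMap.smul_apply, smul_eq_mul, Finset.mul_sum]
      rw [Finset.sum_comm]
      refine Finset.sum_congr rfl fun n hn => Finset.sum_congr rfl fun m hm => ?_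
      rw [hconj]
      simp only [RingHom.id_apply]
      rw [show cw (m - n) * ((t:ℝ):ℂ) = cw m * ((t:ℝ):ℂ) + cw (-n) * ((t:ℝ):ℂ) by
            push_cast [cw]; ring, Complex.exp_add]
      ring
    rw [intervalIntegral.integral_congr (fun t _ => hρ t)]
    rw [intervalIntegral.integral_finset_sum
      (fun n _ => ((continuous_finset_sum (f := fun m (t : ℝ) =>
          Complex.exp (cw (m - n) * t) * (ρ (c n)) (c m)) E fun m _ =>
        ((cont_exp_cw (m - n)).mul continuous_const : Continuous fun t : ℝ =>
          Complex.exp (cw (m - n) * t) * (ρ (c n)) (c m))).intervalIntegrable 0 1))]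
    refine Finset.sum_congr rfl fun n hn => ?_
    rw [intervalIntegral.integral_finset_sum (f := fun m (t : ℝ) =>
          Complex.exp (cw (m - n) * t) * (ρ (c n)) (c m))
      (fun m _ => (((cont_exp_cw (m - n)).mul continuous_const : Continuous fun t : ℝ =>
          Complex.exp (cw (m - n) * t) * (ρ (c n)) (c m)).intervalIntegrable 0 1))]
    have hterm : ∀ m ∈ E,
        (∫ t in (0:ℝ)..1, Complex.exp (cw (m - n) * t) * (ρ (c n)) (c m))
          = if m = n then (ρ (c n)) (c m) else 0 := by
      intro m hm
      rw [intervalIntegral.integral_mul_const, integral_exp_cw]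
      simp [sub_eq_zero, ite_mul]
    rw [Finset.sum_congr rfl hterm,
      Finset.sum_ite_eq' E n (fun m => (ρ (c n)) (c m)), if_pos hn]
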